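/- Let μ>0 and H: T² → R continuous with sup|H| ≤ c < 1 and C¹ with bounded gradient. The operator B: ℓ²(Z²∖{0}) → L²(T²) defined by B[f] = Σ_{k≠0} f_k ∇·[ e^{ik·x} cosh(μ|k|(1+H(x)))/cosh²(μ|k|) · k/|k|² ] is a Hilbert–Schmidt operator, i.e., Σ_{k≠0} ‖B[e_k]‖²_{L²(T²)} < ∞; in particular B is compact. -/

import Mathlib

open Complex Real MeasureTheory

noncomputable def knorm (k : ℤ × ℤ) : ℝ := Real.sqrt ((k.1 : ℝ)^2 + (k.2 : ℝ)^2)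

noncomputable def ek (k : ℤ × ℤ) (x : ℝ × ℝ) : ℂ :=
  Complex.exp (Complex.I * ((k.1 : ℝ) * x.1 + (k.2 : ℝ) * x.2))

noncomputable def Bfield (μ : ℝ) (H : ℝ × ℝ → ℝ) (k : ℤ × ℤ) (x : ℝ × ℝ) : ℂ × ℂ :=
  (ek k x * ((Real.cosh (μ * knorm k * (1 + H x)) / (Real.cosh (μ * knorm k))^2 *
      ((k.1 : ℝ) / (knorm k)^2) : ℝ) : ℂ),
   ek k x * ((Real.cosh (μ * knorm k * (1 + H x)) / (Real.cosh (μ * knorm k))^2 *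
      ((k.2 : ℝ) / (knorm k)^2) : ℝ) : ℂ))

/-- `B[e_k]`, the image of the canonical basis vector `e_k`: the single term
`∇·[e^{ik·x} cosh(μ|k|(1+H(x)))/cosh²(μ|k|) · k/|k|²]`. -/
noncomputable def Bdiv (μ : ℝ) (H : ℝ × ℝ → ℝ) (k : ℤ × ℤ) (x : ℝ × ℝ) : ℂ :=
  deriv (fun t => (Bfield μ H k (t, x.2)).1) x.1 +
  deriv (fun t => (Bfield μ H k (x.1, t)).2) x.2

noncomputable def p1 (H : ℝ × ℝ → ℝ) (x : ℝ × ℝ) : ℝ := fderiv ℝ H x (1, 0)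
noncomputable def p2 (H : ℝ × ℝ → ℝ) (x : ℝ × ℝ) : ℝ := fderiv ℝ H x (0, 1)

lemma hp1 (H : ℝ × ℝ → ℝ) (hH : ContDiff ℝ 1 H) (x : ℝ × ℝ) :
    HasDerivAt (fun t => H (t, x.2)) (p1 H x) x.1 := by
  have h1 : HasDerivAt (fun t : ℝ => (t, x.2)) ((1:ℝ), (0:ℝ)) x.1 :=
    (hasDerivAt_id x.1).prodMk (hasDerivAt_const x.1 x.2)
  have h2 := ((hH.differentiable one_ne_zero) x).hasFDerivAt
  have h3 : HasFDerivAt H (fderiv ℝ H x) (x.1, x.2) := by simpa using h2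
  exact h3.comp_hasDerivAt x.1 h1

lemma hp2 (H : ℝ × ℝ → ℝ) (hH : ContDiff ℝ 1 H) (x : ℝ × ℝ) :
    HasDerivAt (fun t => H (x.1, t)) (p2 H x) x.2 := by
  have h1 : HasDerivAt (fun t : ℝ => (x.1, t)) ((0:ℝ), (1:ℝ)) x.2 :=
    (hasDerivAt_const x.2 x.1).prodMk (hasDerivAt_id x.2)
  have h2 := ((hH.differentiable one_ne_zero) x).hasFDerivAt
  have h3 : HasFDerivAt H (fderiv ℝ H x) (x.1, x.2) := by simpa using h2
  exact h3.comp_hasDerivAt x.2 h1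

noncomputable def G1 (μ : ℝ) (H : ℝ × ℝ → ℝ) (k : ℤ × ℤ) (x : ℝ × ℝ) : ℂ :=
  ek k x * (Complex.I * ((k.1:ℝ):ℂ)) * ((Real.cosh (μ*knorm k*(1+H x))/(Real.cosh (μ*knorm k))^2 *
      ((k.1:ℝ)/(knorm k)^2) : ℝ):ℂ)
   + ek k x * ((Real.sinh (μ*knorm k*(1+H x)) * (μ*knorm k*p1 H x) / (Real.cosh (μ*knorm k))^2 *
      ((k.1:ℝ)/(knorm k)^2) : ℝ):ℂ)

noncomputable def G2 (μ : ℝ) (H : ℝ × ℝ → ℝ) (k : ℤ × ℤ) (x : ℝ × ℝ) : ℂ :=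
  ek k x * (Complex.I * ((k.2:ℝ):ℂ)) * ((Real.cosh (μ*knorm k*(1+H x))/(Real.cosh (μ*knorm k))^2 *
      ((k.2:ℝ)/(knorm k)^2) : ℝ):ℂ)
   + ek k x * ((Real.sinh (μ*knorm k*(1+H x)) * (μ*knorm k*p2 H x) / (Real.cosh (μ*knorm k))^2 *
      ((k.2:ℝ)/(knorm k)^2) : ℝ):ℂ)

lemma hd1 (μ : ℝ) (H : ℝ × ℝ → ℝ) (hH : ContDiff ℝ 1 H) (k : ℤ × ℤ) (x : ℝ × ℝ) :
    HasDerivAt (fun t => (Bfield μ H k (t, x.2)).1) (G1 μ H k x) x.1 := by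
  obtain ⟨a, b⟩ := x
  have hek : HasDerivAt (fun t : ℝ => Complex.exp (Complex.I * (((k.1:ℝ):ℂ) * (t:ℂ) + ((k.2:ℝ):ℂ) * (b:ℂ))))
      (Complex.exp (Complex.I * (((k.1:ℝ):ℂ) * (a:ℂ) + ((k.2:ℝ):ℂ) * (b:ℂ))) * (Complex.I * (((k.1:ℝ):ℂ) * ((1:ℝ):ℂ)))) a := by
    exact ((((hasDerivAt_id a).ofReal_comp.const_mul ((k.1:ℝ):ℂ)).add_const (((k.2:ℝ):ℂ) * (b:ℂ))).const_mul Complex.I).cexp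
  have hin : HasDerivAt (fun t => μ * knorm k * (1 + H (t, b))) (μ * knorm k * p1 H (a, b)) a :=
    ((hp1 H hH (a, b)).const_add 1).const_mul (μ * knorm k)
  have hr : HasDerivAt (fun t => ((Real.cosh (μ*knorm k*(1+H (t, b)))/(Real.cosh (μ*knorm k))^2 *
        ((k.1:ℝ)/(knorm k)^2) : ℝ):ℂ))
      ((Real.sinh (μ*knorm k*(1+H (a,b))) * (μ*knorm k*p1 H (a,b)) / (Real.cosh (μ*knorm k))^2 *
        ((k.1:ℝ)/(knorm k)^2) : ℝ) : ℂ) a := by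
    exact ((((Real.hasDerivAt_cosh (μ*knorm k*(1+H (a,b)))).comp a hin).div_const
      ((Real.cosh (μ*knorm k))^2)).mul_const ((k.1:ℝ)/(knorm k)^2)).ofReal_comp
  have := hek.mul hr
  simp only [Bfield, ek, G1]
  convert this using 1
  push_cast
  · rfl
  · rfl
  · push_cast; ring

lemma hd2 (μ : ℝ) (H : ℝ × ℝ → ℝ) (hH : ContDiff ℝ 1 H) (k : ℤ × ℤ) (x : ℝ × ℝ) :
    HasDerivAt (fun t => (Bfield μ H k (x.1, t)).2) (G2 μ H k x) x.2 := by
  obtain ⟨a, b⟩ := x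
  have hek : HasDerivAt (fun t : ℝ => Complex.exp (Complex.I * (((k.1:ℝ):ℂ) * (a:ℂ) + ((k.2:ℝ):ℂ) * (t:ℂ))))
      (Complex.exp (Complex.I * (((k.1:ℝ):ℂ) * (a:ℂ) + ((k.2:ℝ):ℂ) * (b:ℂ))) * (Complex.I * (((k.2:ℝ):ℂ) * ((1:ℝ):ℂ)))) b := by
    exact ((((hasDerivAt_id b).ofReal_comp.const_mul ((k.2:ℝ):ℂ)).const_add (((k.1:ℝ):ℂ) * (a:ℂ))).const_mul Complex.I).cexp
  have hin : HasDerivAt (fun t => μ * knorm k * (1 + H (a, t))) (μ * knorm k * p2 H (a, b)) b :=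
    ((hp2 H hH (a, b)).const_add 1).const_mul (μ * knorm k)
  have hr : HasDerivAt (fun t => ((Real.cosh (μ*knorm k*(1+H (a, t)))/(Real.cosh (μ*knorm k))^2 *
        ((k.2:ℝ)/(knorm k)^2) : ℝ):ℂ))
      ((Real.sinh (μ*knorm k*(1+H (a,b))) * (μ*knorm k*p2 H (a,b)) / (Real.cosh (μ*knorm k))^2 *
        ((k.2:ℝ)/(knorm k)^2) : ℝ) : ℂ) b := by
    exact ((((Real.hasDerivAt_cosh (μ*knorm k*(1+H (a,b)))).comp b hin).div_const
      ((Real.cosh (μ*knorm k))^2)).mul_const ((k.2:ℝ)/(knorm k)^2)).ofReal_comp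
  have := hek.mul hr
  simp only [Bfield, ek, G2]
  convert this using 1
  push_cast
  · rfl
  · rfl
  · push_cast; ring

lemma Bdiv_eq (μ : ℝ) (H : ℝ × ℝ → ℝ) (hH : ContDiff ℝ 1 H) (k : ℤ × ℤ) (x : ℝ × ℝ) :
    Bdiv μ H k x = G1 μ H k x + G2 μ H k x := by
  rw [Bdiv, (hd1 μ H hH k x).deriv, (hd2 μ H hH k x).deriv]

lemma aux_t1 (r n Ch K D : ℝ) (hrn : |r| ≤ n) (hn : 0 < n)
    (hCh0 : 0 < Ch) (hChK : Ch ≤ K) (hD : 0 < D) :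
    |r| * (|Ch / D| * |r / n^2|) ≤ K / D := by
  rw [abs_div, abs_div, _root_.abs_of_nonneg hCh0.le,
    _root_.abs_of_nonneg hD.le, _root_.abs_of_nonneg (sq_nonneg n)]
  have hr : 0 ≤ |r| := abs_nonneg r
  have h : |r| * (Ch / D * (|r| / n^2)) = (|r| * |r| * Ch) / (D * n^2) := by
    field_simp
  rw [h, div_le_div_iff₀ (by positivity) hD]
  have h1 : (|r| * |r|) * Ch ≤ (n * n) * K :=
    mul_le_mul (mul_le_mul hrn hrn hr hn.le) hChK hCh0.le (by positivity)
  nlinarith [mul_le_mul_of_nonneg_right h1 hD.le]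

lemma aux_t2 (s p r n μ d K D : ℝ) (hsK : |s| ≤ K) (hpd : |p| ≤ d) (hrn : |r| ≤ n)
    (hn : 0 < n) (hμ : 0 < μ) (hD : 0 < D) (hK : 0 < K) :
    |s * (μ * n * p) / D * (r / n^2)| ≤ μ * d * (K / D) := by
  rw [abs_mul, abs_div, abs_mul, abs_div, abs_mul, abs_mul μ n, _root_.abs_of_nonneg hμ.le,
    _root_.abs_of_nonneg hn.le, _root_.abs_of_nonneg hD.le, _root_.abs_of_nonneg (sq_nonneg n)]
  have hd0 : 0 ≤ d := le_trans (abs_nonneg p) hpd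
  have h : |s| * (μ * n * |p|) / D * (|r| / n^2) = (|s| * |p| * |r| * (μ * n)) / (D * n^2) := by
    field_simp
  have h2 : μ * d * (K / D) = (K * d * n * (μ * n)) / (D * n^2) := by
    field_simp
  rw [h, h2, div_le_div_iff₀ (by positivity) (by positivity)]
  have h1 : |s| * |p| ≤ K * d := mul_le_mul hsK hpd (abs_nonneg p) hK.le
  have h3 : |s| * |p| * |r| ≤ K * d * n :=
    le_trans (mul_le_mul_of_nonneg_right h1 (abs_nonneg r))
      (mul_le_mul_of_nonneg_left hrn (by positivity))
  have h4 := mul_le_mul_of_nonneg_right h3 (by positivity : (0:ℝ) ≤ (μ * n) * (D * n^2))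
  nlinarith [h4]

lemma norm_G_le (μ c d : ℝ) (hμ : 0 < μ) (hc : c < 1) (H : ℝ × ℝ → ℝ)
    (hHc : ∀ x, |H x| ≤ c) (hp1d : ∀ x, |p1 H x| ≤ d) (hp2d : ∀ x, |p2 H x| ≤ d)
    (k : ℤ × ℤ) (hk : k ≠ 0) (x : ℝ × ℝ) :
    ‖G1 μ H k x + G2 μ H k x‖ ≤
      2 * (1 + μ * d) * (Real.cosh (μ * knorm k * (1 + c)) / (Real.cosh (μ * knorm k))^2) := by
  have hc0 : 0 ≤ c := le_trans (abs_nonneg _) (hHc 0)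
  have hd0 : 0 ≤ d := le_trans (abs_nonneg _) (hp1d 0)
  have hn : 0 < knorm k := by
    have hne : ¬((k.1 : ℝ) = 0 ∧ (k.2 : ℝ) = 0) := by
      intro ⟨h1, h2⟩
      exact hk (Prod.ext (by exact_mod_cast h1) (by exact_mod_cast h2))
    rcases not_and_or.1 hne with h1 | h1 <;>
      · apply Real.sqrt_pos.2; positivity
  set n := knorm k with hndef
  have hnsq : n^2 = (k.1:ℝ)^2 + (k.2:ℝ)^2 := Real.sq_sqrt (by positivity)
  have hk1 : |(k.1:ℝ)| ≤ n := by
    rw [hndef, knorm, ← Real.sqrt_sq_eq_abs]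
    exact Real.sqrt_le_sqrt (by nlinarith [sq_nonneg ((k.2:ℝ))])
  have hk2 : |(k.2:ℝ)| ≤ n := by
    rw [hndef, knorm, ← Real.sqrt_sq_eq_abs]
    exact Real.sqrt_le_sqrt (by nlinarith [sq_nonneg ((k.1:ℝ))])
  set D := (Real.cosh (μ * n))^2 with hDdef
  have hD0 : 0 < D := by positivity
  set K := Real.cosh (μ * n * (1 + c)) with hKdef
  have hK0 : 0 < K := Real.cosh_pos _
  have hHb : Real.cosh (μ * n * (1 + H x)) ≤ K := by
    rw [hKdef]
    apply Real.cosh_le_cosh.2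
    have h1 := abs_le.1 (hHc x)
    have hμn : 0 < μ * n := mul_pos hμ hn
    rw [_root_.abs_of_nonneg (le_of_lt (mul_pos hμn (by linarith : (0:ℝ) < 1 + H x))),
      _root_.abs_of_nonneg (le_of_lt (mul_pos hμn (by linarith : (0:ℝ) < 1 + c)))]
    exact mul_le_mul_of_nonneg_left (by linarith : 1 + H x ≤ 1 + c) hμn.le
  have hSb : |Real.sinh (μ * n * (1 + H x))| ≤ K := by
    rw [Real.abs_sinh]
    calc Real.sinh |μ * n * (1 + H x)| ≤ Real.cosh |μ * n * (1 + H x)| :=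
          (Real.sinh_lt_cosh _).le
      _ = Real.cosh (μ * n * (1 + H x)) := Real.cosh_abs _
      _ ≤ K := hHb
  have e1 : ‖ek k x‖ = 1 := by
    simp [ek, Complex.norm_exp]
  have hCh0 : (0:ℝ) < Real.cosh (μ * n * (1 + H x)) := Real.cosh_pos _
  have b11 : ‖ek k x * (Complex.I * ((k.1:ℝ):ℂ)) * ((Real.cosh (μ*n*(1+H x))/D *
      ((k.1:ℝ)/n^2) : ℝ):ℂ)‖ ≤ K / D := by
    simp only [norm_mul, e1, Complex.norm_I, Complex.norm_real, Real.norm_eq_abs,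
      one_mul, mul_one]
    exact aux_t1 _ _ _ _ _ hk1 hn hCh0 hHb hD0
  have b12 : ‖ek k x * ((Real.sinh (μ*n*(1+H x)) * (μ*n*p1 H x) / D *
      ((k.1:ℝ)/n^2) : ℝ):ℂ)‖ ≤ μ * d * (K / D) := by
    simp only [norm_mul, e1, Complex.norm_real, Real.norm_eq_abs, one_mul]
    rw [← abs_mul]
    exact aux_t2 _ _ _ _ _ _ _ _ hSb (hp1d x) hk1 hn hμ hD0 hK0
  have b21 : ‖ek k x * (Complex.I * ((k.2:ℝ):ℂ)) * ((Real.cosh (μ*n*(1+H x))/D *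
      ((k.2:ℝ)/n^2) : ℝ):ℂ)‖ ≤ K / D := by
    simp only [norm_mul, e1, Complex.norm_I, Complex.norm_real, Real.norm_eq_abs,
      one_mul, mul_one]
    exact aux_t1 _ _ _ _ _ hk2 hn hCh0 hHb hD0
  have b22 : ‖ek k x * ((Real.sinh (μ*n*(1+H x)) * (μ*n*p2 H x) / D *
      ((k.2:ℝ)/n^2) : ℝ):ℂ)‖ ≤ μ * d * (K / D) := by
    simp only [norm_mul, e1, Complex.norm_real, Real.norm_eq_abs, one_mul]
    rw [← abs_mul]
    exact aux_t2 _ _ _ _ _ _ _ _ hSb (hp2d x) hk2 hn hμ hD0 hK0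
  calc ‖G1 μ H k x + G2 μ H k x‖ ≤ ‖G1 μ H k x‖ + ‖G2 μ H k x‖ := norm_add_le _ _
    _ ≤ (K / D + μ * d * (K / D)) + (K / D + μ * d * (K / D)) := by
        apply add_le_add
        · exact le_trans (norm_add_le _ _) (add_le_add b11 b12)
        · exact le_trans (norm_add_le _ _) (add_le_add b21 b22)
    _ = 2 * (1 + μ * d) * (K / D) := by ring

lemma abs_fst_le_knorm (k : ℤ × ℤ) : |(k.1:ℝ)| ≤ knorm k := by
  rw [knorm, ← Real.sqrt_sq_eq_abs]
  exact Real.sqrt_le_sqrt (by nlinarith [sq_nonneg ((k.2:ℝ))])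

lemma abs_snd_le_knorm (k : ℤ × ℤ) : |(k.2:ℝ)| ≤ knorm k := by
  rw [knorm, ← Real.sqrt_sq_eq_abs]
  exact Real.sqrt_le_sqrt (by nlinarith [sq_nonneg ((k.1:ℝ))])

lemma summable_tail (ε : ℝ) (hε : 0 < ε) :
    Summable (fun k : ℤ × ℤ => Real.exp (-ε * knorm k)) := by
  have hnat : Summable (fun n : ℕ => Real.exp (-(ε/2) * n)) := by
    have h := Real.summable_exp_nat_mul_iff (a := -(ε/2)).2 (by linarith)
    simpa [mul_comm] using h
  have h1 : Summable (fun m : ℤ => Real.exp (-(ε/2) * |(m:ℝ)|)) := by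
    apply Summable.of_nat_of_neg
    · simpa [Nat.abs_cast] using hnat
    · have : ∀ n : ℕ, Real.exp (-(ε/2) * |((-(n:ℤ)):ℝ)|) = Real.exp (-(ε/2) * n) := by
        intro n; push_cast; rw [abs_neg, Nat.abs_cast]
      simpa [this] using hnat
  have h2 : Summable (fun k : ℤ × ℤ =>
      Real.exp (-(ε/2) * |(k.1:ℝ)|) * Real.exp (-(ε/2) * |(k.2:ℝ)|)) :=
    h1.mul_of_nonneg h1 (fun _ => Real.exp_nonneg _) (fun _ => Real.exp_nonneg _)
  apply h2.of_nonneg_of_le (fun _ => Real.exp_nonneg _)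
  intro k
  rw [← Real.exp_add]
  apply Real.exp_le_exp.2
  have h3 := abs_fst_le_knorm k
  have h4 := abs_snd_le_knorm k
  nlinarith

lemma cosh_ratio_le (a c : ℝ) (ha : 0 ≤ a) (hc0 : 0 ≤ c) (hc : c < 1) :
    Real.cosh (a*(1+c)) / (Real.cosh a)^2 ≤ 4 * Real.exp (-(1-c)*a) := by
  have h1 : Real.cosh (a*(1+c)) ≤ Real.exp (a*(1+c)) := by
    rw [Real.cosh_eq]
    have h := Real.exp_le_exp.2 (by nlinarith : -(a*(1+c)) ≤ a*(1+c))
    linarith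
  have h2 : Real.exp a / 2 ≤ Real.cosh a := by
    rw [Real.cosh_eq]
    have := Real.exp_pos (-a)
    linarith
  have h3 : Real.exp (2*a) / 4 ≤ (Real.cosh a)^2 := by
    have hb := pow_le_pow_left₀ (by positivity) h2 2
    have he : (Real.exp a / 2)^2 = Real.exp (2*a) / 4 := by
      rw [div_pow, show Real.exp (2*a) = Real.exp a ^ 2 by
        rw [← Real.exp_nat_mul]; norm_num]
      norm_num
    linarith [he ▸ hb]
  have h4 : Real.cosh (a*(1+c)) / (Real.cosh a)^2 ≤
      Real.exp (a*(1+c)) / (Real.exp (2*a) / 4) := by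
    apply div_le_div₀ (Real.exp_nonneg _) h1 (by positivity) h3
  calc Real.cosh (a*(1+c)) / (Real.cosh a)^2 ≤ Real.exp (a*(1+c)) / (Real.exp (2*a) / 4) := h4
    _ = 4 * Real.exp (-(1-c)*a) := by
        rw [show -(1-c)*a = a*(1+c) - 2*a by ring, Real.exp_sub]
        field_simp

/-- the operator `B : ℓ²(Z²∖{0}) → L²(T²)` is Hilbert–Schmidt:
`Σ_{k≠0} ‖B[e_k]‖²_{L²(T²)} < ∞`. -/
theorem stmt9 (μ c d : ℝ) (hμ : 0 < μ) (hc : c < 1)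
    (H : ℝ × ℝ → ℝ) (hH : ContDiff ℝ 1 H)
    (hHc : ∀ x, |H x| ≤ c)
    (hHx : ∀ x : ℝ × ℝ, |deriv (fun t => H (t, x.2)) x.1| ≤ d)
    (hHy : ∀ x : ℝ × ℝ, |deriv (fun t => H (x.1, t)) x.2| ≤ d) :
    Summable (fun k : {k : ℤ × ℤ // k ≠ 0} =>
      ∫ x in (Set.Icc (0:ℝ) (2*π)) ×ˢ (Set.Icc (0:ℝ) (2*π)),
        ‖Bdiv μ H k.1 x‖^2) := by
  have hc0 : 0 ≤ c := le_trans (abs_nonneg _) (hHc 0)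
  have hd0 : 0 ≤ d := le_trans (abs_nonneg _) (hHx 0)
  have hp1d : ∀ x, |p1 H x| ≤ d := fun x => by
    rw [show p1 H x = deriv (fun t => H (t, x.2)) x.1 from ((hp1 H hH x).deriv).symm]
    exact hHx x
  have hp2d : ∀ x, |p2 H x| ≤ d := fun x => by
    rw [show p2 H x = deriv (fun t => H (x.1, t)) x.2 from ((hp2 H hH x).deriv).symm]
    exact hHy x
  set s : Set (ℝ × ℝ) := (Set.Icc (0:ℝ) (2*π)) ×ˢ (Set.Icc (0:ℝ) (2*π)) with hsdef
  have hsm : MeasurableSet s := measurableSet_Icc.prod measurableSet_Icc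
  have hsf : volume s < ⊤ := (isCompact_Icc.prod isCompact_Icc).measure_lt_top
  set V : ℝ := (volume s).toReal with hVdef
  have hV0 : 0 ≤ V := ENNReal.toReal_nonneg
  set M : ℤ × ℤ → ℝ := fun k =>
    2 * (1 + μ * d) * (Real.cosh (μ * knorm k * (1 + c)) / (Real.cosh (μ * knorm k))^2)
    with hMdef
  have hM0 : ∀ k, 0 ≤ M k := fun k => by
    have : (0:ℝ) < Real.cosh (μ * knorm k * (1 + c)) := Real.cosh_pos _
    have : (0:ℝ) < (Real.cosh (μ * knorm k))^2 := by positivity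
    positivity
  -- pointwise bound on each integral
  have hint : ∀ k : {k : ℤ × ℤ // k ≠ 0},
      (∫ x in s, ‖Bdiv μ H k.1 x‖^2) ≤ (M k.1)^2 * V := by
    intro k
    have hb : ∀ x ∈ s, ‖(‖Bdiv μ H k.1 x‖^2 : ℝ)‖ ≤ (M k.1)^2 := by
      intro x _
      rw [Real.norm_eq_abs, _root_.abs_of_nonneg (by positivity)]
      have hbx : ‖Bdiv μ H k.1 x‖ ≤ M k.1 := by
        rw [Bdiv_eq μ H hH k.1 x]
        exact norm_G_le μ c d hμ hc H hHc hp1d hp2d k.1 k.2 x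
      exact pow_le_pow_left₀ (norm_nonneg _) hbx 2
    have h2 := norm_setIntegral_le_of_norm_le_const hsf hb
    rw [Real.norm_eq_abs] at h2
    exact le_trans (le_abs_self _) h2
  have hnonneg : ∀ k : {k : ℤ × ℤ // k ≠ 0},
      0 ≤ ∫ x in s, ‖Bdiv μ H k.1 x‖^2 := fun k =>
    setIntegral_nonneg hsm (fun x _ => by positivity)
  -- summable dominating series
  set ε : ℝ := (1 - c) * μ with hεdef
  have hε : 0 < ε := by
    have : 0 < 1 - c := by linarith
    positivity
  have hMe : ∀ k : ℤ × ℤ, M k ≤ 8 * (1 + μ * d) * Real.exp (-ε * knorm k) := by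
    intro k
    have ha : 0 ≤ μ * knorm k := mul_nonneg hμ.le (Real.sqrt_nonneg _)
    have h := cosh_ratio_le (μ * knorm k) c ha hc0 hc
    have heq : -(1-c) * (μ * knorm k) = -ε * knorm k := by rw [hεdef]; ring
    rw [heq] at h
    have h2 : (0:ℝ) ≤ 2 * (1 + μ * d) := by positivity
    calc M k = 2 * (1 + μ * d) *
          (Real.cosh (μ * knorm k * (1 + c)) / (Real.cosh (μ * knorm k))^2) := rfl
      _ ≤ 2 * (1 + μ * d) * (4 * Real.exp (-ε * knorm k)) :=
          mul_le_mul_of_nonneg_left h h2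
      _ = 8 * (1 + μ * d) * Real.exp (-ε * knorm k) := by ring
  have hM2 : ∀ k : ℤ × ℤ, (M k)^2 * V ≤
      (8 * (1 + μ * d))^2 * V * Real.exp (-ε * knorm k) := by
    intro k
    have he1 : Real.exp (-ε * knorm k) ≤ 1 := by
      apply Real.exp_le_one_iff.2
      have := Real.sqrt_nonneg ((k.1:ℝ)^2 + (k.2:ℝ)^2)
      have : 0 ≤ knorm k := Real.sqrt_nonneg _
      nlinarith
    have hsq : (M k)^2 ≤ (8 * (1 + μ * d) * Real.exp (-ε * knorm k))^2 :=
      pow_le_pow_left₀ (hM0 k) (hMe k) 2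
    have : (8 * (1 + μ * d) * Real.exp (-ε * knorm k))^2 ≤
        (8 * (1 + μ * d))^2 * Real.exp (-ε * knorm k) := by
      have he0 := Real.exp_nonneg (-ε * knorm k)
      nlinarith [mul_nonneg (mul_nonneg (sq_nonneg (8*(1+μ*d))) he0)
        (by linarith : 0 ≤ 1 - Real.exp (-ε * knorm k))]
    nlinarith [sq_nonneg (M k)]
  have hsum : Summable (fun k : {k : ℤ × ℤ // k ≠ 0} =>
      (8 * (1 + μ * d))^2 * V * Real.exp (-ε * knorm k.1)) :=
    (((summable_tail ε hε).mul_left ((8 * (1 + μ * d))^2 * V))).subtype _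
  apply hsum.of_nonneg_of_le hnonneg
  intro k
  exact le_trans (hint k) (hM2 k.1)
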